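/- Let s ≥ 2. In the universal enveloping algebra of the Witt/Virasoro algebra acting on a module M with a vector w satisfying ω_i w = 0 for all i > s (where ω_i = L(i−1)): for integers 0 ≤ p ≤ q and i₁,…,i_p ≥ 0, i_{p+1},…,i_q < 0 with s·q ≤ i₁ + ⋯ + i_q, if p < q or some i_l with 1 ≤ l ≤ p satisfies i_l ≠ s, then ω_{i_q} ⋯ ω_{i_{p+1}} ω_{i_p} ⋯ ω_{i_1} w = 0. -/

import Mathlib

section Aux

variable {M : Type*} [AddCommGroup M] [Module ℂ M] (ω : ℤ → Module.End ℂ M)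

private def Fw (w : M) (L : List ℤ) : M := List.foldl (fun v a => ω a v) w L

private lemma Fw_cons (w : M) (a : ℤ) (L : List ℤ) : Fw ω w (a :: L) = Fw ω (ω a w) L := rfl

private lemma Fw_append (w : M) (L L' : List ℤ) : Fw ω w (L ++ L') = Fw ω (Fw ω w L) L' :=
  List.foldl_append ..

private lemma Fw_zero (L : List ℤ) : Fw ω (0 : M) L = 0 := by
  induction L with
  | nil => rfl
  | cons a L ih => rw [Fw_cons, map_zero]; exact ih

private lemma Fw_add (L : List ℤ) : ∀ u v : M, Fw ω (u + v) L = Fw ω u L + Fw ω v L := by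
  induction L with
  | nil => intro u v; rfl
  | cons a L ih => intro u v; rw [Fw_cons, map_add, ih, Fw_cons, Fw_cons]

private lemma Fw_smul (L : List ℤ) : ∀ (r : ℂ) (v : M), Fw ω (r • v) L = r • Fw ω v L := by
  induction L with
  | nil => intro r v; rfl
  | cons a L ih => intro r v; rw [Fw_cons, map_smul, ih, Fw_cons]

private lemma comm_aux (c : ℂ)
    (hrel : ∀ i k : ℤ, ω i * ω k - ω k * ω i =
      ((i - k : ℤ) : ℂ) • ω (i + k - 1) +
        (if i + k = 2 then (((i - 1) ^ 3 - (i - 1) : ℤ) : ℂ) / 12 * c else 0) •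
          (1 : Module.End ℂ M))
    (i k : ℤ) (h2 : i + k ≠ 2) (v : M) :
    ω i (ω k v) = ω k (ω i v) + ((i - k : ℤ) : ℂ) • ω (i + k - 1) v := by
  have h := hrel i k
  rw [if_neg h2, zero_smul, add_zero] at h
  have h' : ω i * ω k = ((i - k : ℤ) : ℂ) • ω (i + k - 1) + ω k * ω i :=
    sub_eq_iff_eq_add.mp h
  have h'' := LinearMap.congr_fun h' v
  simpa [Module.End.mul_apply, add_comm] using h''

private lemma list_sum_le (s : ℤ) : ∀ (A : List ℤ), (∀ a ∈ A, a ≤ s) →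
    A.sum ≤ s * A.length := by
  intro A
  induction A with
  | nil => simp
  | cons a A ih =>
    intro h
    have h1 := ih (fun b hb => h b (List.mem_cons_of_mem _ hb))
    have h2 := h a List.mem_cons_self
    simp only [List.sum_cons, List.length_cons]
    push_cast
    linarith

private lemma list_sum_lt (s : ℤ) : ∀ (A : List ℤ), (∀ a ∈ A, a ≤ s) →
    (∃ a ∈ A, a ≠ s) → A.sum < s * A.length := by
  intro A
  induction A with
  | nil => rintro _ ⟨a, ha, _⟩; simp at ha
  | cons a A ih =>
    rintro h ⟨b, hb, hbs⟩
    have h1 := list_sum_le s A (fun x hx => h x (List.mem_cons_of_mem _ hx))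
    have h2 := h a List.mem_cons_self
    simp only [List.sum_cons, List.length_cons]
    push_cast
    rcases List.mem_cons.mp hb with rfl | hbA
    · have : b < s := lt_of_le_of_ne h2 hbs
      linarith
    · have := ih (fun x hx => h x (List.mem_cons_of_mem _ hx)) ⟨b, hbA, hbs⟩
      linarith

private lemma list_sum_neg (s : ℤ) : ∀ (B : List ℤ), (∀ b ∈ B, b < 0) →
    B.sum ≤ -(B.length : ℤ) := by
  intro B
  induction B with
  | nil => simp
  | cons b B ih =>
    intro h
    have h1 := ih (fun x hx => h x (List.mem_cons_of_mem _ hx))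
    have h2 := h b List.mem_cons_self
    simp only [List.sum_cons, List.length_cons]
    push_cast
    linarith

private lemma inner_step (c : ℂ)
    (hrel : ∀ i k : ℤ, ω i * ω k - ω k * ω i =
      ((i - k : ℤ) : ℂ) • ω (i + k - 1) +
        (if i + k = 2 then (((i - 1) ^ 3 - (i - 1) : ℤ) : ℂ) / 12 * c else 0) •
          (1 : Module.End ℂ M))
    (s : ℤ) (hs : 2 ≤ s) (w : M) (hw : ∀ i : ℤ, s < i → ω i w = 0) (n : ℕ)
    (IH : ∀ m : ℕ, m < n → ∀ A B : List ℤ, A.length + B.length = m →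
      (∀ a ∈ A, 0 ≤ a) → (∀ b ∈ B, b < 0) → s * m ≤ A.sum + B.sum →
      (B ≠ [] ∨ ∃ a ∈ A, a ≠ s) → Fw ω w (A ++ B) = 0) :
    ∀ (A₁ : List ℤ) (x : ℤ) (A₂ B : List ℤ),
      A₁.length + 1 + A₂.length + B.length = n →
      (∀ a ∈ A₁, 0 ≤ a) → s < x → (∀ a ∈ A₂, 0 ≤ a) → (∀ b ∈ B, b < 0) →
      s * n ≤ A₁.sum + x + A₂.sum + B.sum →
      Fw ω w (A₁ ++ x :: (A₂ ++ B)) = 0 := by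
  intro A₁
  induction A₁ using List.reverseRecOn with
  | nil =>
    intro x A₂ B hlen h1 hx h2 hB hsum
    rw [List.nil_append, Fw_cons, hw x hx, Fw_zero]
  | append_singleton A₁ y ihA =>
    intro x A₂ B hlen h1 hx h2 hB hsum
    have hy : 0 ≤ y := h1 y (by simp)
    have h1' : ∀ a ∈ A₁, 0 ≤ a := fun a ha => h1 a (by simp [ha])
    have hxy : x + y ≠ 2 := by omega
    have hlist : (A₁ ++ [y]) ++ x :: (A₂ ++ B) = A₁ ++ (y :: x :: (A₂ ++ B)) := by simp
    rw [hlist, Fw_append, Fw_cons, Fw_cons]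
    set v := Fw ω w A₁ with hv
    rw [comm_aux ω c hrel x y hxy v, Fw_add, Fw_smul]
    have hlenA : (A₁ ++ [y]).length = A₁.length + 1 := by simp
    have hsumA : (A₁ ++ [y]).sum = A₁.sum + y := by simp
    have e1 : Fw ω (ω y (ω x v)) (A₂ ++ B) = 0 := by
      have := ihA x (y :: A₂) B (by simp at hlen ⊢; omega)
        h1' hx (by intro a ha; rcases List.mem_cons.mp ha with rfl | h; exacts [hy, h2 a h]) hB
        (by simp only [List.sum_cons]; rw [hlenA] at hlen; rw [hsumA] at hsum; push_cast at hsum ⊢; linarith)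
      rw [List.cons_append, Fw_append, Fw_cons, Fw_cons] at this
      exact this
    have e2 : Fw ω (ω (x + y - 1) v) (A₂ ++ B) = 0 := by
      have hn1 : 1 ≤ n := by omega
      have hlen2 : (A₁ ++ (x + y - 1) :: A₂).length + B.length = n - 1 := by
        simp at hlen ⊢; omega
      have hsum2 : s * ((n - 1 : ℕ) : ℤ) ≤ (A₁ ++ (x + y - 1) :: A₂).sum + B.sum := by
        rw [hlenA] at hlen; rw [hsumA] at hsum
        simp only [List.sum_append, List.sum_cons]
        have : ((n - 1 : ℕ) : ℤ) = (n : ℤ) - 1 := by omega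
        rw [this]
        nlinarith [hsum, hs]
      have hcond2 : B ≠ [] ∨ ∃ a ∈ A₁ ++ (x + y - 1) :: A₂, a ≠ s := by
        by_cases hBe : B = []
        · right
          by_contra hall
          push_neg at hall
          have hallq : ∀ a ∈ A₁ ++ (x + y - 1) :: A₂, a = s := hall
          subst hBe
          simp only [List.sum_nil, add_zero, List.length_nil] at hsum2 hlen2
          have hge : s * ((n - 1 : ℕ) : ℤ) ≤ (A₁ ++ (x + y - 1) :: A₂).sum := hsum2
          have hle : (A₁ ++ (x + y - 1) :: A₂).sum ≤ s * (A₁ ++ (x + y - 1) :: A₂).length :=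
            list_sum_le s _ (fun a ha => le_of_eq (hallq a ha))
          -- but sum is strictly bigger than s*(n-1)
          rw [hlenA] at hlen; rw [hsumA] at hsum
          have hsumval : (A₁ ++ (x + y - 1) :: A₂).sum = A₁.sum + x + A₂.sum + y - 1 := by
            simp only [List.sum_append, List.sum_cons]; ring
          have hlenval : ((A₁ ++ (x + y - 1) :: A₂).length : ℤ) = ((n - 1 : ℕ) : ℤ) := by
            exact_mod_cast congrArg (Nat.cast : ℕ → ℤ) (by simp at hlen ⊢; omega)
          have hne1 : ((n - 1 : ℕ) : ℤ) = (n : ℤ) - 1 := by omega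
          rw [hlenval, hne1] at hle
          rw [hne1] at hge
          simp only [List.sum_nil, add_zero] at hsum
          nlinarith [hsum, hs, hsumval, hle]
        · exact Or.inl hBe
      have := IH (n - 1) (by omega) (A₁ ++ (x + y - 1) :: A₂) B hlen2
        (by intro a ha
            rcases List.mem_append.mp ha with h | h
            · exact h1' a h
            · rcases List.mem_cons.mp h with rfl | h
              · omega
              · exact h2 a h)
        hB hsum2 hcond2
      rw [List.append_assoc, List.cons_append, Fw_append, Fw_cons] at this
      exact this
    rw [e1, e2, smul_zero, add_zero]

private lemma main_aux (c : ℂ)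
    (hrel : ∀ i k : ℤ, ω i * ω k - ω k * ω i =
      ((i - k : ℤ) : ℂ) • ω (i + k - 1) +
        (if i + k = 2 then (((i - 1) ^ 3 - (i - 1) : ℤ) : ℂ) / 12 * c else 0) •
          (1 : Module.End ℂ M))
    (s : ℤ) (hs : 2 ≤ s) (w : M) (hw : ∀ i : ℤ, s < i → ω i w = 0) :
    ∀ (n : ℕ) (A B : List ℤ), A.length + B.length = n →
      (∀ a ∈ A, 0 ≤ a) → (∀ b ∈ B, b < 0) →
      s * (n : ℤ) ≤ A.sum + B.sum → (B ≠ [] ∨ ∃ a ∈ A, a ≠ s) →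
      Fw ω w (A ++ B) = 0 := by
  intro n
  induction n using Nat.strong_induction_on with
  | _ n IH =>
    intro A B hlen hA hB hsum hcond
    have hn : (n : ℤ) = (A.length : ℤ) + (B.length : ℤ) := by exact_mod_cast hlen.symm
    have hBle := list_sum_neg s B hB
    have hBlen0 : (0 : ℤ) ≤ (B.length : ℤ) := by positivity
    have hsB : 2 * (B.length : ℤ) ≤ s * B.length := by nlinarith
    have hex : ∃ x ∈ A, s < x := by
      by_contra h
      push_neg at h
      have hAle := list_sum_le s A h
      rcases hcond with hBne | ⟨a, haA, has⟩
      · have hB1 : 1 ≤ (B.length : ℤ) := by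
          exact_mod_cast Nat.one_le_iff_ne_zero.mpr (by simpa using hBne)
        rw [hn] at hsum
        nlinarith
      · have hAlt : A.sum < s * A.length := list_sum_lt s A h ⟨a, haA, has⟩
        rw [hn] at hsum
        nlinarith
    obtain ⟨x, hxA, hx⟩ := hex
    obtain ⟨A₁, A₂, rfl⟩ := List.append_of_mem hxA
    have h1 : ∀ a ∈ A₁, 0 ≤ a := fun a ha => hA a (by simp [ha])
    have h2 : ∀ a ∈ A₂, 0 ≤ a := fun a ha => hA a (by simp [ha])
    have hlist : (A₁ ++ x :: A₂) ++ B = A₁ ++ x :: (A₂ ++ B) := by simp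
    rw [hlist]
    exact inner_step ω c hrel s hs w hw n IH A₁ x A₂ B
      (by simp at hlen ⊢; omega) h1 hx h2 hB
      (by simp only [List.sum_append, List.sum_cons] at hsum; linarith)

end Aux

theorem stmt7 {M : Type*} [AddCommGroup M] [Module ℂ M]
    (ω : ℤ → Module.End ℂ M) (c : ℂ)
    (hrel : ∀ i k : ℤ, ω i * ω k - ω k * ω i =
      ((i - k : ℤ) : ℂ) • ω (i + k - 1) +
        (if i + k = 2 then (((i - 1) ^ 3 - (i - 1) : ℤ) : ℂ) / 12 * c else 0) •
          (1 : Module.End ℂ M))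
    (s : ℤ) (hs : 2 ≤ s) (w : M) (hw : ∀ i : ℤ, s < i → ω i w = 0)
    (q p : ℕ) (hpq : p ≤ q) (idx : Fin q → ℤ)
    (hpos : ∀ l : Fin q, (l : ℕ) < p → 0 ≤ idx l)
    (hneg : ∀ l : Fin q, p ≤ (l : ℕ) → idx l < 0)
    (hsum : s * (q : ℤ) ≤ ∑ l, idx l)
    (hcond : p < q ∨ ∃ l : Fin q, (l : ℕ) < p ∧ idx l ≠ s) :
    List.foldl (fun v a => ω a v) w (List.ofFn idx) = 0 := by
  set L : List ℤ := List.ofFn idx with hL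
  have hLlen : L.length = q := by simp [hL]
  have hsplit : L.take p ++ L.drop p = L := List.take_append_drop p L
  have hAlen : (L.take p).length = p := by simp [hLlen, hpq]
  have hBlen : (L.drop p).length = q - p := by simp [hLlen]
  have hA : ∀ a ∈ L.take p, 0 ≤ a := by
    intro a ha
    obtain ⟨i, hi, hia⟩ := List.mem_iff_getElem.mp ha
    rw [List.getElem_take] at hia
    have hip : i < p := by rwa [hAlen] at hi
    have hiq : i < q := lt_of_lt_of_le hip hpq
    have : L[i]'(by omega) = idx ⟨i, hiq⟩ := by simp [hL]
    rw [this] at hia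
    rw [← hia]
    exact hpos ⟨i, hiq⟩ hip
  have hB : ∀ b ∈ L.drop p, b < 0 := by
    intro b hb
    obtain ⟨i, hi, hib⟩ := List.mem_iff_getElem.mp hb
    rw [List.getElem_drop] at hib
    have hiq : p + i < q := by
      have := hi; rw [hBlen] at this; omega
    have : L[p + i]'(by omega) = idx ⟨p + i, hiq⟩ := by simp [hL]
    rw [this] at hib
    rw [← hib]
    exact hneg ⟨p + i, hiq⟩ (by simp)
  have hsum' : s * (q : ℤ) ≤ (L.take p).sum + (L.drop p).sum := by
    have : (L.take p).sum + (L.drop p).sum = L.sum := by rw [← List.sum_append, hsplit]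
    rw [this, hL, List.sum_ofFn]
    exact hsum
  have hcond' : L.drop p ≠ [] ∨ ∃ a ∈ L.take p, a ≠ s := by
    rcases hcond with h | ⟨l, hlp, hls⟩
    · left
      intro hnil
      have := congrArg List.length hnil
      rw [hBlen] at this
      simp at this
      omega
    · right
      refine ⟨idx l, ?_, hls⟩
      rw [List.mem_iff_getElem]
      refine ⟨l, by rw [hAlen]; exact hlp, ?_⟩
      rw [List.getElem_take]
      simp [hL]
  have := main_aux ω c hrel s hs w hw q (L.take p) (L.drop p)
    (by rw [hAlen, hBlen]; omega) hA hB hsum' hcond'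
  rw [hsplit] at this
  exact this
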